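/- Let N, M, k be positive integers, let χ be a Dirichlet character modulo N with values in ℂ, and let f : ℍ → ℂ be a function satisfying the weight-k equivariance f ∣[k] γ = χ(d)·f for all γ = (a b; c d) ∈ Γ₀(N), where (f ∣[k] γ)(τ) = (cτ + d)^{−k} f((aτ+b)/(cτ+d)). Define g : ℍ → ℂ by g(τ) = (1/M) Σ_{s=0}^{M−1} f(τ + s/M). Then g ∣[k] γ = χ(d)·g for all γ = (a b; c d) ∈ Γ₀(N M²). -/

import Mathlib

open UpperHalfPlane CongruenceSubgroup MatrixGroups

private lemma coe_sl_smul (g : SL(2, ℤ)) (z : ℍ) :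
    ((g • z : ℍ) : ℂ) = (((g 0 0 : ℤ) : ℂ) * z + ((g 0 1 : ℤ) : ℂ)) /
      (((g 1 0 : ℤ) : ℂ) * z + ((g 1 1 : ℤ) : ℂ)) := by
  rw [UpperHalfPlane.specialLinearGroup_apply]
  simp [algebraMap_int_eq]

private lemma phi_cast (M : ℕ) (hM : 0 < M) (x : ℤ) (s : ℕ) :
    ((((((s : ℤ) * x * x) % (M : ℤ)).toNat : ℕ)) : ℤ) = ((s : ℤ) * x * x) % (M : ℤ) :=
  Int.toNat_of_nonneg (Int.emod_nonneg _ (by exact_mod_cast hM.ne'))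

private lemma phi_lt (M : ℕ) (hM : 0 < M) (x : ℤ) (s : ℕ) :
    ((((s : ℤ) * x * x) % (M : ℤ)).toNat : ℕ) < M := by
  have h0 : (0:ℤ) < (M:ℤ) := by exact_mod_cast hM
  have h1 := Int.emod_lt_of_pos ((s:ℤ)*x*x) h0
  have h2 := Int.emod_nonneg ((s:ℤ)*x*x) h0.ne'
  omega

private lemma phi_inv (M : ℕ) (hM : 0 < M) (x y : ℤ) (hxy : (M:ℤ) ∣ x*y*(x*y) - 1)
    (s : ℕ) (hs : s < M) :
    (((((((s : ℤ) * x * x) % (M:ℤ)).toNat : ℤ) * y * y) % (M:ℤ)).toNat : ℕ) = s := by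
  have h0 : (0:ℤ) < (M:ℤ) := by exact_mod_cast hM
  rw [phi_cast M hM x s]
  have e1 : ((s:ℤ)*x*x) % (M:ℤ) ≡ (s:ℤ)*x*x [ZMOD (M:ℤ)] := Int.emod_emod_of_dvd _ dvd_rfl
  have e2 := (e1.mul_right y).mul_right y
  have e3 : (s:ℤ)*x*x*y*y ≡ (s:ℤ) [ZMOD (M:ℤ)] := by
    rw [Int.modEq_iff_dvd]
    obtain ⟨w, hw⟩ := hxy
    exact ⟨-(s:ℤ)*w, by linear_combination (-(s:ℤ))*hw⟩
  have e4 := e2.trans e3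
  rw [Int.ModEq] at e4
  rw [e4, Int.emod_eq_of_lt (Int.natCast_nonneg s) (by exact_mod_cast hs)]
  exact Int.toNat_natCast s

theorem stmt_12 (N M k : ℕ) (hN : 0 < N) (hM : 0 < M) (hk : 0 < k)
    (χ : DirichletCharacter ℂ N) (f : ℍ → ℂ)
    (hf : ∀ γ ∈ Gamma0 N, ∀ τ : ℍ, f (γ • τ) =
      χ (((γ : SL(2, ℤ)) 1 1 : ℤ) : ZMod N) *
        ((((γ : SL(2, ℤ)) 1 0 : ℤ) : ℂ) * τ + (((γ : SL(2, ℤ)) 1 1 : ℤ) : ℂ)) ^ k * f τ)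
    (g : ℍ → ℂ)
    (hg : ∀ τ : ℍ, g τ = (M : ℂ)⁻¹ * ∑ s ∈ Finset.range M, f (((s : ℝ) / (M : ℝ)) +ᵥ τ)) :
    ∀ γ ∈ Gamma0 (N * M ^ 2), ∀ τ : ℍ, g (γ • τ) =
      χ (((γ : SL(2, ℤ)) 1 1 : ℤ) : ZMod N) *
        ((((γ : SL(2, ℤ)) 1 0 : ℤ) : ℂ) * τ + (((γ : SL(2, ℤ)) 1 1 : ℤ) : ℂ)) ^ k * g τ := by
  intro γ hγ τ
  set a : ℤ := γ 0 0 with ha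
  set b : ℤ := γ 0 1 with hb
  set c : ℤ := γ 1 0 with hc
  set d : ℤ := γ 1 1 with hd
  have hdet : a * d - b * c = 1 := by
    have h := γ.2
    rw [Matrix.det_fin_two] at h
    linarith [h]
  obtain ⟨e, he⟩ : ((N : ℤ) * (M:ℤ)^2) ∣ c := by
    have h := (Gamma0_mem).mp hγ
    rw [ZMod.intCast_zmod_eq_zero_iff_dvd] at h
    exact_mod_cast h
  have hM0 : ((M:ℤ)) ≠ 0 := by exact_mod_cast hM.ne'
  have hMC : (M:ℂ) ≠ 0 := by exact_mod_cast hM.ne'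
  have had : (M:ℤ) ∣ a * d - 1 := ⟨(M:ℤ)*(b*N*e), by linear_combination hdet + b * he⟩
  have hden1 : (c:ℂ) * (τ:ℂ) + (d:ℂ) ≠ 0 := by
    have h := UpperHalfPlane.linear_ne_zero (cd := ![(c:ℝ), (d:ℝ)]) τ ?_
    · simpa using h
    · intro h0
      have hc0 : c = 0 := by exact_mod_cast (by simpa using congrFun h0 0 : (c:ℝ) = 0)
      have hd0 : d = 0 := by exact_mod_cast (by simpa using congrFun h0 1 : (d:ℝ) = 0)
      rw [hc0, hd0] at hdet
      simp at hdet
  have key : ∀ s ∈ Finset.range M, f (((s:ℝ)/(M:ℝ)) +ᵥ (γ • τ)) =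
      χ ((d : ℤ) : ZMod N) * ((c:ℂ)*(τ:ℂ) + (d:ℂ))^k *
        f ((((((((s:ℤ)*d*d) % (M:ℤ)).toNat : ℕ) : ℝ))/(M:ℝ)) +ᵥ τ) := by
    intro s hs
    set t : ℤ := ((s:ℤ)*d*d) % (M:ℤ) with htdef
    have htnn : 0 ≤ t := Int.emod_nonneg _ hM0
    have htcast : ((t.toNat : ℕ) : ℤ) = t := Int.toNat_of_nonneg htnn
    obtain ⟨u, hu⟩ : (M:ℤ) ∣ (s:ℤ)*d - a*t := by
      obtain ⟨v, hv⟩ : (M:ℤ) ∣ (s:ℤ)*d*d - t := Int.dvd_self_sub_of_emod_eq rfl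
      obtain ⟨w, hw⟩ := had
      exact ⟨-(s:ℤ)*d*w + a*v, by linear_combination (-(s:ℤ)*d)*hw + a*hv⟩
    set A : Matrix (Fin 2) (Fin 2) ℤ :=
      !![a + s*N*M*e, b + u - s*t*N*e; N*M^2*e, d - t*N*M*e] with hA
    have hAdet : A.det = 1 := by
      rw [hA, Matrix.det_fin_two_of]
      linear_combination hdet + b*he + (N:ℤ)*M*e*hu
    set γs : SL(2, ℤ) := ⟨A, hAdet⟩ with hγsdef
    have e00 : (γs 0 0 : ℤ) = a + s*N*M*e := by simp [hγsdef, hA]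
    have e01 : (γs 0 1 : ℤ) = b + u - s*t*N*e := by simp [hγsdef, hA]
    have e10 : (γs 1 0 : ℤ) = N*M^2*e := by simp [hγsdef, hA]
    have e11 : (γs 1 1 : ℤ) = d - t*N*M*e := by simp [hγsdef, hA]
    have hmem : γs ∈ Gamma0 N := by
      rw [Gamma0_mem, e10]
      push_cast
      simp
    have heC : ((c:ℤ):ℂ) = (N:ℂ)*(M:ℂ)^2*(e:ℂ) := by exact_mod_cast congrArg (Int.cast : ℤ → ℂ) he
    have huC : ((s:ℕ):ℂ)*(d:ℂ) - (a:ℂ)*(t:ℂ) = (M:ℂ)*(u:ℂ) := by exact_mod_cast congrArg (Int.cast : ℤ → ℂ) hu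
    have htC : (((t.toNat:ℕ)):ℂ) = (t:ℂ) := by exact_mod_cast htcast
    have hxc : ((((t.toNat:ℕ):ℝ)/(M:ℝ) : ℝ) : ℂ) = (t:ℂ)/(M:ℂ) := by
      push_cast
      rw [htC]
    have hden2 : ((N*M^2*e : ℤ):ℂ) * ((t:ℂ)/(M:ℂ) + (τ:ℂ)) + ((d - t*N*M*e : ℤ):ℂ)
        = (c:ℂ)*(τ:ℂ) + (d:ℂ) := by
      field_simp
      push_cast
      linear_combination -(M:ℂ) * (τ:ℂ) * heC
    have hnum : ((a + s*N*M*e : ℤ):ℂ) * ((t:ℂ)/(M:ℂ) + (τ:ℂ)) + ((b + u - s*t*N*e : ℤ):ℂ)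
        = (s:ℂ)/(M:ℂ) * ((c:ℂ)*(τ:ℂ) + (d:ℂ)) + ((a:ℂ)*(τ:ℂ) + (b:ℂ)) := by
      field_simp
      push_cast
      linear_combination -huC - (s:ℂ)*(τ:ℂ)*heC
    have hpt : γs • ((((t.toNat:ℕ):ℝ)/(M:ℝ)) +ᵥ τ) = ((s:ℝ)/(M:ℝ)) +ᵥ (γ • τ) := by
      apply UpperHalfPlane.ext
      rw [coe_sl_smul, UpperHalfPlane.coe_vadd, UpperHalfPlane.coe_vadd, coe_sl_smul,
        e00, e01, e10, e11, hxc, hnum, hden2, add_div, mul_div_cancel_right₀ _ hden1]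
      push_cast
      ring
    have hF := hf γs hmem ((((t.toNat:ℕ):ℝ)/(M:ℝ)) +ᵥ τ)
    rw [hpt] at hF
    rw [hF, e10, e11, UpperHalfPlane.coe_vadd, hxc, hden2]
    have hχ : (((d - t*N*M*e : ℤ) : ZMod N) : ZMod N) = ((d : ℤ) : ZMod N) := by
      push_cast
      simp
    rw [hχ]
  rw [hg (γ • τ), hg τ, Finset.sum_congr rfl key]
  have hda : (M:ℤ) ∣ (d*a)*(d*a) - 1 := by
    obtain ⟨w, hw⟩ := had
    exact ⟨w*(a*d+1), by linear_combination (a*d+1)*hw⟩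
  have had2 : (M:ℤ) ∣ (a*d)*(a*d) - 1 := by
    obtain ⟨w, hw⟩ := had
    exact ⟨w*(a*d+1), by linear_combination (a*d+1)*hw⟩
  have hre : ∑ s ∈ Finset.range M, f ((((((((s:ℤ)*d*d) % (M:ℤ)).toNat : ℕ) : ℝ))/(M:ℝ)) +ᵥ τ)
      = ∑ s ∈ Finset.range M, f (((s:ℝ)/(M:ℝ)) +ᵥ τ) := by
    refine Finset.sum_nbij' (fun s => ((((s:ℤ)*d*d) % (M:ℤ)).toNat))
      (fun s => ((((s:ℤ)*a*a) % (M:ℤ)).toNat)) ?_ ?_ ?_ ?_ ?_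
    · intro s _
      exact Finset.mem_range.mpr (phi_lt M hM d s)
    · intro s _
      exact Finset.mem_range.mpr (phi_lt M hM a s)
    · intro s hs
      exact phi_inv M hM d a hda s (Finset.mem_range.mp hs)
    · intro s hs
      exact phi_inv M hM a d had2 s (Finset.mem_range.mp hs)
    · intro s _
      rfl
  rw [← Finset.mul_sum, hre]
  ring
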